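/- Let k be a field and x₁, …, x₈ ∈ k distinct elements with x₁ + ⋯ + x₈ = 0. If for every size-four subset {i₁,i₂,i₃,i₄} ⊆ {1,…,8} one has x_{i₁}+x_{i₂}+x_{i₃}+x_{i₄} ≠ 0, then no four of the eight points (1 : x_i : x_i² : x_i⁴) ∈ P³(k) are coplanar. -/

import Mathlib

lemma det_identity {k : Type*} [Field k] (y : Fin 4 → k) :
    (Matrix.of fun a b : Fin 4 => y a ^ (![(0 : ℕ), 1, 2, 4] b)).det =
      (y 1 - y 0) * (y 2 - y 0) * (y 3 - y 0) * (y 2 - y 1) * (y 3 - y 1) * (y 3 - y 2)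
        * (y 0 + y 1 + y 2 + y 3) := by
  simp [Matrix.det_succ_row_zero, Fin.sum_univ_succ, Fin.succAbove, show (Fin.succ 2 : Fin 4) = 3 from rfl, show (Fin.castSucc 2 : Fin 4) = 2 from rfl]
  ring

/-- x₁,…,x₈ distinct with sum 0, every four of them having nonzero sum.
Then no four of the points (1 : x_i : x_i² : x_i⁴) ∈ P³ are coplanar, i.e. for every
injective choice of four indices, the 4×4 matrix of representatives has nonzero
determinant. -/
theorem stmt5 {k : Type*} [Field k] (x : Fin 8 → k) (hx : Function.Injective x)
    (hsum : ∑ i, x i = 0)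
    (h4 : ∀ s : Finset (Fin 8), s.card = 4 → ∑ i ∈ s, x i ≠ 0)
    (i : Fin 4 → Fin 8) (hi : Function.Injective i) :
    (Matrix.of fun a b : Fin 4 => x (i a) ^ (![(0 : ℕ), 1, 2, 4] b)).det ≠ 0 := by
  have hy : Function.Injective (fun a => x (i a)) := hx.comp hi
  have hne : ∀ a b : Fin 4, a ≠ b → x (i a) - x (i b) ≠ 0 := by
    intro a b hab
    exact sub_ne_zero_of_ne (fun h => hab (hy h))
  have hsum4 : x (i 0) + x (i 1) + x (i 2) + x (i 3) ≠ 0 := by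
    have hcard : (Finset.univ.image i).card = 4 := by
      rw [Finset.card_image_of_injective _ hi, Finset.card_univ, Fintype.card_fin]
    have := h4 _ hcard
    rwa [Finset.sum_image (fun a _ b _ h => hi h), Fin.sum_univ_four] at this
  rw [det_identity (fun a => x (i a))]
  exact mul_ne_zero (mul_ne_zero (mul_ne_zero (mul_ne_zero (mul_ne_zero (mul_ne_zero
    (hne 1 0 (by decide)) (hne 2 0 (by decide))) (hne 3 0 (by decide)))
    (hne 2 1 (by decide))) (hne 3 1 (by decide))) (hne 3 2 (by decide))) hsum4
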